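/- Let r : [0,1] → ℝ be twice continuously differentiable. Then sup over ω ∈ Ω and t ∈ [0,1] of | n^{3/2} ∫_0^t ( ∫_0^s r(u) cos(2π H_n(ω,u)) du ) ds | tends to 0 as n → ∞. More precisely, ∫_0^t ∫_0^s r(u) cos(2π H_n(ω,u)) du ds = (1/(2πn)) ∫_0^t r(s) sin(2πns) ds + O(1/n²) uniformly in t and ω, and the first term is itself O(1/n²). -/

import Mathlib

open MeasureTheory Real

open MeasureTheory Real Set intervalIntegral

/-- General integration by parts via FTC on [0,t] ⊆ [0,1]. -/
lemma my_ibp (f f' A T : ℝ → ℝ)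
    (hf : ∀ u ∈ Set.Icc (0:ℝ) 1, HasDerivWithinAt f (f' u) (Set.Icc 0 1) u)
    (hf' : ContinuousOn f' (Set.Icc 0 1))
    (hA : ∀ x, HasDerivAt A (T x) x) (hT : Continuous T)
    {t : ℝ} (ht : t ∈ Set.Icc (0:ℝ) 1) :
    ∫ u in (0:ℝ)..t, f u * T u =
      f t * A t - f 0 * A 0 - ∫ u in (0:ℝ)..t, f' u * A u := by
  have hfc : ContinuousOn f (Set.Icc 0 1) := fun x hx => (hf x hx).continuousWithinAt
  have hAc : Continuous A := by
    rw [continuous_iff_continuousAt]; exact fun x => (hA x).continuousAt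
  have hsub : Set.Icc (0:ℝ) t ⊆ Set.Icc 0 1 := Set.Icc_subset_Icc le_rfl ht.2
  have huIcc : Set.uIcc (0:ℝ) t = Set.Icc 0 t := Set.uIcc_of_le ht.1
  have i1 : IntervalIntegrable (fun u => f' u * A u) volume 0 t := by
    apply ContinuousOn.intervalIntegrable
    rw [huIcc]; exact (hf'.mono hsub).mul hAc.continuousOn
  have i2 : IntervalIntegrable (fun u => f u * T u) volume 0 t := by
    apply ContinuousOn.intervalIntegrable
    rw [huIcc]; exact (hfc.mono hsub).mul hT.continuousOn
  have key := intervalIntegral.integral_eq_sub_of_hasDeriv_right_of_le ht.1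
    (f := fun u => f u * A u) (f' := fun u => f' u * A u + f u * T u)
    ((hfc.mono hsub).mul hAc.continuousOn)
    (fun x hx => by
      have hx1 : x ∈ Set.Ioo (0:ℝ) 1 := ⟨hx.1, lt_of_lt_of_le hx.2 ht.2⟩
      have hfd : HasDerivAt f (f' x) x :=
        (hf x (Set.mem_Icc_of_Ioo hx1)).hasDerivAt (Icc_mem_nhds hx1.1 hx1.2)
      exact (hfd.mul (hA x)).hasDerivWithinAt)
    (i1.add i2)
  rw [intervalIntegral.integral_add i1 i2] at key
  linarith

lemma hasDerivAt_sin_div (c : ℝ) (hc : c ≠ 0) (x : ℝ) :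
    HasDerivAt (fun u : ℝ => Real.sin (c*u) / c) (Real.cos (c*x)) x := by
  have h1 : HasDerivAt (fun u : ℝ => c * u) c x := by
    simpa using (hasDerivAt_id x).const_mul c
  have h2 := ((Real.hasDerivAt_sin (c*x)).comp x h1).div_const c
  simpa [mul_div_assoc, mul_div_cancel_right₀ _ hc] using h2

lemma hasDerivAt_neg_cos_div (c : ℝ) (hc : c ≠ 0) (x : ℝ) :
    HasDerivAt (fun u : ℝ => -(Real.cos (c*u) / c)) (Real.sin (c*x)) x := by
  have h1 : HasDerivAt (fun u : ℝ => c * u) c x := by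
    simpa using (hasDerivAt_id x).const_mul c
  have h2 := (((Real.hasDerivAt_cos (c*x)).comp x h1).div_const c).neg
  have hcc : -(-Real.sin (c*x) * c / c) = Real.sin (c*x) := by
    field_simp
  rw [← hcc]; exact h2

/-- IBP, cos version. -/
lemma ibp_cos (f f' : ℝ → ℝ)
    (hf : ∀ u ∈ Set.Icc (0:ℝ) 1, HasDerivWithinAt f (f' u) (Set.Icc 0 1) u)
    (hf' : ContinuousOn f' (Set.Icc 0 1))
    {c : ℝ} (hc : 0 < c) {t : ℝ} (ht : t ∈ Set.Icc (0:ℝ) 1) :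
    ∫ u in (0:ℝ)..t, f u * Real.cos (c*u) =
      f t * Real.sin (c*t) / c - (1/c) * ∫ u in (0:ℝ)..t, f' u * Real.sin (c*u) := by
  have h := my_ibp f f' (fun u => Real.sin (c*u) / c) (fun u => Real.cos (c*u)) hf hf'
    (hasDerivAt_sin_div c hc.ne')
    (Real.continuous_cos.comp (continuous_const.mul continuous_id)) ht
  have h4 : (∫ u in (0:ℝ)..t, f' u * (Real.sin (c*u) / c))
      = (1/c) * ∫ u in (0:ℝ)..t, f' u * Real.sin (c*u) := by
    rw [← intervalIntegral.integral_const_mul]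
    apply intervalIntegral.integral_congr
    intro x _; ring
  rw [h4] at h
  rw [h]; simp [Real.sin_zero]
  ring

/-- IBP, sin version. -/
lemma ibp_sin (f f' : ℝ → ℝ)
    (hf : ∀ u ∈ Set.Icc (0:ℝ) 1, HasDerivWithinAt f (f' u) (Set.Icc 0 1) u)
    (hf' : ContinuousOn f' (Set.Icc 0 1))
    {c : ℝ} (hc : 0 < c) {t : ℝ} (ht : t ∈ Set.Icc (0:ℝ) 1) :
    ∫ u in (0:ℝ)..t, f u * Real.sin (c*u) =
      (f 0 - f t * Real.cos (c*t)) / c + (1/c) * ∫ u in (0:ℝ)..t, f' u * Real.cos (c*u) := by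
  have h := my_ibp f f' (fun u => -(Real.cos (c*u) / c)) (fun u => Real.sin (c*u)) hf hf'
    (hasDerivAt_neg_cos_div c hc.ne')
    (Real.continuous_sin.comp (continuous_const.mul continuous_id)) ht
  have h4 : (∫ u in (0:ℝ)..t, f' u * -(Real.cos (c*u) / c))
      = (-(1/c)) * ∫ u in (0:ℝ)..t, f' u * Real.cos (c*u) := by
    rw [← intervalIntegral.integral_const_mul]
    apply intervalIntegral.integral_congr
    intro x _; ring
  rw [h4] at h
  rw [h]; simp [Real.cos_zero]
  ring

/-- Bound on integrals over [0,t] ⊆ [0,1]. -/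
lemma bound01 (g : ℝ → ℝ) {M t : ℝ} (ht : t ∈ Set.Icc (0:ℝ) 1)
    (hM : ∀ u ∈ Set.Icc (0:ℝ) 1, |g u| ≤ M) :
    |∫ u in (0:ℝ)..t, g u| ≤ M := by
  have hM0 : 0 ≤ M := le_trans (abs_nonneg (g 0)) (hM 0 ⟨le_rfl, zero_le_one⟩)
  have h := intervalIntegral.norm_integral_le_of_norm_le_const (a := (0:ℝ)) (b := t) (C := M)
    (f := g) (fun x hx => by
      rw [Set.uIoc_of_le ht.1] at hx
      exact hM x ⟨le_of_lt hx.1, le_trans hx.2 ht.2⟩)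
  calc |∫ u in (0:ℝ)..t, g u| ≤ M * |t - 0| := h
    _ ≤ M * 1 := by
        apply mul_le_mul_of_nonneg_left _ hM0
        rw [sub_zero, abs_of_nonneg ht.1]; exact ht.2
    _ = M := mul_one M

lemma cosH {n : ℕ} (hn : 1 ≤ n) (Hf : ℝ → ℝ) (Y : ℕ → ℝ)
    (hpm : ∀ k, Y k = 1 ∨ Y k = -1)
    (hHf : ∀ k : ℕ, k ≤ n - 1 → ∀ u : ℝ, (k:ℝ)/n ≤ u → u ≤ ((k:ℝ)+1)/n →
      Hf u = (∑ i ∈ Finset.range k, Y (i+1)) + n * Y (k+1) * (u - (k:ℝ)/n))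
    {u : ℝ} (hu : u ∈ Set.Icc (0:ℝ) 1) :
    Real.cos (2 * π * Hf u) = Real.cos (2 * π * n * u) := by
  have hn0 : (0:ℝ) < n := by exact_mod_cast hn
  have hn' : (n:ℝ) ≠ 0 := hn0.ne'
  set k : ℕ := min (⌊(n:ℝ)*u⌋.toNat) (n-1) with hkdef
  have hk1 : k ≤ n - 1 := min_le_right _ _
  have hnu0 : (0:ℝ) ≤ (n:ℝ)*u := mul_nonneg hn0.le hu.1
  have hfl0 : (0:ℤ) ≤ ⌊(n:ℝ)*u⌋ := Int.floor_nonneg.mpr hnu0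
  have hkfloor : (k:ℝ) ≤ (n:ℝ)*u := by
    have h1 : (k:ℤ) ≤ ⌊(n:ℝ)*u⌋ := by
      have := min_le_left (⌊(n:ℝ)*u⌋.toNat) (n-1)
      have h2 : (k:ℤ) ≤ (⌊(n:ℝ)*u⌋.toNat : ℤ) := by exact_mod_cast this
      rwa [Int.toNat_of_nonneg hfl0] at h2
    calc (k:ℝ) = ((k:ℤ):ℝ) := by norm_cast
      _ ≤ (⌊(n:ℝ)*u⌋ : ℝ) := by exact_mod_cast h1
      _ ≤ (n:ℝ)*u := Int.floor_le _
  have hlo : (k:ℝ)/n ≤ u := by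
    rw [div_le_iff₀ hn0]; linarith [hkfloor]
  have hup : (n:ℝ)*u ≤ (k:ℝ)+1 := by
    rcases le_or_gt (⌊(n:ℝ)*u⌋.toNat) (n-1) with h | h
    · have hkeq : k = ⌊(n:ℝ)*u⌋.toNat := min_eq_left h
      have h2 : (n:ℝ)*u < ⌊(n:ℝ)*u⌋ + 1 := Int.lt_floor_add_one _
      have h3 : ((⌊(n:ℝ)*u⌋ : ℝ)) = (k:ℝ) := by
        rw [hkeq]; exact_mod_cast (Int.toNat_of_nonneg hfl0).symm
      linarith
    · have hkeq : k = n - 1 := min_eq_right h.le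
      have h4 : ((k:ℝ)) = (n:ℝ) - 1 := by
        rw [hkeq]; push_cast [Nat.cast_sub hn]; ring
      have : (n:ℝ)*u ≤ (n:ℝ)*1 := mul_le_mul_of_nonneg_left hu.2 hn0.le
      rw [h4]; linarith
  have hhi : u ≤ ((k:ℝ)+1)/n := by
    rw [le_div_iff₀ hn0]; linarith [hup]
  have hHeq := hHf k hk1 u hlo hhi
  obtain ⟨m, hm⟩ : ∃ m : ℤ, ((m:ℝ)) = ∑ i ∈ Finset.range k, Y (i+1) := by
    clear hHeq hkdef hk1
    induction k with
    | zero => exact ⟨0, by simp⟩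
    | succ j ih =>
      obtain ⟨m, hm⟩ := ih
      rcases hpm (j+1) with h | h
      · exact ⟨m+1, by rw [Finset.sum_range_succ, ← hm, h]; push_cast; ring⟩
      · exact ⟨m-1, by rw [Finset.sum_range_succ, ← hm, h]; push_cast; ring⟩
  rw [hHeq, ← hm]
  rcases hpm (k+1) with h | h
  · rw [h]
    have harg : 2*π*((m:ℝ) + (n:ℝ) * 1 * (u - (k:ℝ)/(n:ℝ)))
        = 2*π*(n:ℝ)*u + ((m - (k:ℕ) : ℤ):ℝ) * (2*π) := by
      push_cast; field_simp; ring
    rw [harg, Real.cos_add_int_mul_two_pi]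
  · rw [h]
    have harg : 2*π*((m:ℝ) + (n:ℝ) * (-1) * (u - (k:ℝ)/(n:ℝ)))
        = -(2*π*(n:ℝ)*u) + ((m + (k:ℕ) : ℤ):ℝ) * (2*π) := by
      push_cast; field_simp; ring
    rw [harg, Real.cos_add_int_mul_two_pi, Real.cos_neg]

/-- Bound for ∫_0^t f(u) sin(cu) du via IBP. -/
lemma sin_int_bound (f f' : ℝ → ℝ)
    (hf : ∀ u ∈ Set.Icc (0:ℝ) 1, HasDerivWithinAt f (f' u) (Set.Icc 0 1) u)
    (hf' : ContinuousOn f' (Set.Icc 0 1))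
    {Mf Mf' : ℝ}
    (hMf : ∀ u ∈ Set.Icc (0:ℝ) 1, |f u| ≤ Mf)
    (hMf' : ∀ u ∈ Set.Icc (0:ℝ) 1, |f' u| ≤ Mf')
    {c : ℝ} (hc : 0 < c) {t : ℝ} (ht : t ∈ Set.Icc (0:ℝ) 1) :
    |∫ u in (0:ℝ)..t, f u * Real.sin (c*u)| ≤ (2*Mf + Mf')/c := by
  have hMf0 : 0 ≤ Mf := le_trans (abs_nonneg (f 0)) (hMf 0 ⟨le_rfl, zero_le_one⟩)
  have hMf'0 : 0 ≤ Mf' := le_trans (abs_nonneg (f' 0)) (hMf' 0 ⟨le_rfl, zero_le_one⟩)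
  rw [ibp_sin f f' hf hf' hc ht]
  have hI : |∫ u in (0:ℝ)..t, f' u * Real.cos (c*u)| ≤ Mf' := by
    apply bound01 _ ht
    intro u hu
    rw [abs_mul]
    calc |f' u| * |Real.cos (c*u)| ≤ Mf' * 1 :=
          mul_le_mul (hMf' u hu) (Real.abs_cos_le_one _) (abs_nonneg _) hMf'0
      _ = Mf' := mul_one _
  have h1 : |f 0 - f t * Real.cos (c*t)| ≤ 2*Mf := by
    have ha := hMf 0 ⟨le_rfl, zero_le_one⟩
    have hb : |f t * Real.cos (c*t)| ≤ Mf := by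
      rw [abs_mul]
      calc |f t| * |Real.cos (c*t)| ≤ Mf * 1 :=
            mul_le_mul (hMf t ht) (Real.abs_cos_le_one _) (abs_nonneg _) hMf0
        _ = Mf := mul_one _
    calc |f 0 - f t * Real.cos (c*t)| ≤ |f 0| + |f t * Real.cos (c*t)| := abs_sub _ _
      _ ≤ 2*Mf := by linarith
  calc |(f 0 - f t * Real.cos (c*t))/c + (1/c) * ∫ u in (0:ℝ)..t, f' u * Real.cos (c*u)|
      ≤ |(f 0 - f t * Real.cos (c*t))/c| + |(1/c) * ∫ u in (0:ℝ)..t, f' u * Real.cos (c*u)| :=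
        abs_add_le _ _
    _ = |f 0 - f t * Real.cos (c*t)|/c + (1/c) * |∫ u in (0:ℝ)..t, f' u * Real.cos (c*u)| := by
        rw [abs_div, abs_of_pos hc, abs_mul, abs_of_pos (by positivity : (0:ℝ) < 1/c)]
    _ ≤ (2*Mf)/c + (1/c) * Mf' := by
        gcongr
    _ = (2*Mf + Mf')/c := by ring

/-- Core deterministic estimate. -/
lemma core_est (r r' r'' : ℝ → ℝ)
    (hr : ∀ u ∈ Set.Icc (0:ℝ) 1, HasDerivWithinAt r (r' u) (Set.Icc 0 1) u)
    (hr' : ∀ u ∈ Set.Icc (0:ℝ) 1, HasDerivWithinAt r' (r'' u) (Set.Icc 0 1) u)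
    (hr'' : ContinuousOn r'' (Set.Icc 0 1)) :
    ∃ C : ℝ, 0 ≤ C ∧ ∀ (n : ℕ), 1 ≤ n → ∀ t ∈ Set.Icc (0:ℝ) 1,
      |(∫ s in (0:ℝ)..t, (∫ u in (0:ℝ)..s, r u * Real.cos (2 * π * n * u))) -
        (1 / (2 * π * n)) * ∫ s in (0:ℝ)..t, r s * Real.sin (2 * π * n * s)| ≤ C / n ^ 2 ∧
      |(1 / (2 * π * n)) * ∫ s in (0:ℝ)..t, r s * Real.sin (2 * π * n * s)| ≤ C / n ^ 2 := by
  have hrc : ContinuousOn r (Set.Icc 0 1) := fun x hx => (hr x hx).continuousWithinAt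
  have hr'c : ContinuousOn r' (Set.Icc 0 1) := fun x hx => (hr' x hx).continuousWithinAt
  obtain ⟨M₀, hM₀⟩ := isCompact_Icc.exists_bound_of_continuousOn hrc
  obtain ⟨M₁, hM₁⟩ := isCompact_Icc.exists_bound_of_continuousOn hr'c
  obtain ⟨M₂, hM₂⟩ := isCompact_Icc.exists_bound_of_continuousOn hr''
  simp only [Real.norm_eq_abs] at hM₀ hM₁ hM₂
  have hM₀0 : 0 ≤ M₀ := le_trans (abs_nonneg (r 0)) (hM₀ 0 ⟨le_rfl, zero_le_one⟩)
  have hM₁0 : 0 ≤ M₁ := le_trans (abs_nonneg (r' 0)) (hM₁ 0 ⟨le_rfl, zero_le_one⟩)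
  have hM₂0 : 0 ≤ M₂ := le_trans (abs_nonneg (r'' 0)) (hM₂ 0 ⟨le_rfl, zero_le_one⟩)
  refine ⟨(2*M₀ + M₁) + (2*M₁ + M₂), by linarith, ?_⟩
  intro n hn t ht
  have hn0 : (0:ℝ) < n := by exact_mod_cast hn
  have hn1 : (1:ℝ) ≤ n := by exact_mod_cast hn
  have hπ : (0:ℝ) < π := Real.pi_pos
  set c : ℝ := 2 * π * n with hcdef
  have hc : 0 < c := by positivity
  have hcn : (n:ℝ)^2 ≤ c^2 := by
    have h3 : (3:ℝ) < π := Real.pi_gt_three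
    have hsq : c^2 = (2*π)^2 * (n:ℝ)^2 := by rw [hcdef]; ring
    have h1 : (0:ℝ) ≤ ((2*π)^2 - 1) * (n:ℝ)^2 :=
      mul_nonneg (by nlinarith) (sq_nonneg _)
    nlinarith [h1]
  -- replace 2*π*n*u by c*u
  have hcu : ∀ x : ℝ, 2 * π * (n:ℝ) * x = c * x := fun x => by rw [hcdef]
  -- the sin integral bound
  have hsinr : |∫ s in (0:ℝ)..t, r s * Real.sin (c*s)| ≤ (2*M₀ + M₁)/c :=
    sin_int_bound r r' hr hr'c hM₀ hM₁ hc ht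
  -- second bullet
  have hbullet2 : |(1 / c) * ∫ s in (0:ℝ)..t, r s * Real.sin (c*s)|
      ≤ ((2*M₀ + M₁) + (2*M₁ + M₂)) / n^2 := by
    rw [abs_mul, abs_of_pos (by positivity : (0:ℝ) < 1/c)]
    calc (1/c) * |∫ s in (0:ℝ)..t, r s * Real.sin (c*s)| ≤ (1/c) * ((2*M₀ + M₁)/c) := by
          gcongr
      _ = (2*M₀ + M₁)/c^2 := by rw [sq]; ring
      _ ≤ (2*M₀ + M₁)/(n:ℝ)^2 := by
          apply div_le_div_of_nonneg_left (by linarith) (by positivity) hcn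
      _ ≤ ((2*M₀ + M₁) + (2*M₁ + M₂)) / (n:ℝ)^2 := by
          apply (div_le_div_iff_of_pos_right (by positivity)).mpr
          linarith
  refine ⟨?_, hbullet2⟩
  -- first bullet: the double integral identity
  have huIcc : Set.uIcc (0:ℝ) t = Set.Icc 0 t := Set.uIcc_of_le ht.1
  have hsub : Set.Icc (0:ℝ) t ⊆ Set.Icc 0 1 := Set.Icc_subset_Icc le_rfl ht.2
  set g : ℝ → ℝ := fun s => ∫ u in (0:ℝ)..s, r' u * Real.sin (c*u) with hgdef
  have hgbound : ∀ s ∈ Set.Icc (0:ℝ) 1, |g s| ≤ (2*M₁ + M₂)/c := fun s hs =>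
    sin_int_bound r' r'' hr' hr'' hM₁ hM₂ hc hs
  have hgcont : ContinuousOn g (Set.Icc 0 t) := by
    have hint : IntegrableOn (fun u => r' u * Real.sin (c*u)) (Set.uIcc 0 t) volume := by
      apply ContinuousOn.integrableOn_compact (huIcc ▸ isCompact_Icc)
      rw [huIcc]
      exact (hr'c.mono hsub).mul
        ((Real.continuous_sin.comp (continuous_const.mul continuous_id)).continuousOn)
    have := intervalIntegral.continuousOn_primitive_interval hint
    rwa [huIcc] at this
  have hin : Set.EqOn (fun s => ∫ u in (0:ℝ)..s, r u * Real.cos (c*u))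
      (fun s => r s * Real.sin (c*s)/c - (1/c) * g s) (Set.uIcc 0 t) := by
    intro s hs
    exact ibp_cos r r' hr hr'c hc (hsub (huIcc ▸ hs))
  have hdouble : (∫ s in (0:ℝ)..t, ∫ u in (0:ℝ)..s, r u * Real.cos (c*u))
      = (1/c) * (∫ s in (0:ℝ)..t, r s * Real.sin (c*s)) - (1/c) * ∫ s in (0:ℝ)..t, g s := by
    rw [intervalIntegral.integral_congr hin]
    have i1 : IntervalIntegrable (fun s => r s * Real.sin (c*s)/c) volume 0 t := by
      apply ContinuousOn.intervalIntegrable; rw [huIcc]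
      exact ((hrc.mono hsub).mul
        ((Real.continuous_sin.comp (continuous_const.mul continuous_id)).continuousOn)).div_const c
    have i2 : IntervalIntegrable (fun s => (1/c) * g s) volume 0 t := by
      apply ContinuousOn.intervalIntegrable; rw [huIcc]
      exact continuousOn_const.mul hgcont
    rw [intervalIntegral.integral_sub i1 i2, intervalIntegral.integral_const_mul]
    congr 1
    rw [intervalIntegral.integral_div]
    ring
  have hb1 : |∫ s in (0:ℝ)..t, g s| ≤ (2*M₁+M₂)/c := bound01 g ht hgbound
  rw [hdouble]
  have heq : (1/c) * (∫ s in (0:ℝ)..t, r s * Real.sin (c*s)) - (1/c) * (∫ s in (0:ℝ)..t, g s)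
      - (1/c) * (∫ s in (0:ℝ)..t, r s * Real.sin (c*s))
      = -((1/c) * ∫ s in (0:ℝ)..t, g s) := by ring
  rw [heq, abs_neg, abs_mul, abs_of_pos (by positivity : (0:ℝ) < 1/c)]
  calc (1/c) * |∫ s in (0:ℝ)..t, g s| ≤ (1/c) * ((2*M₁ + M₂)/c) := by gcongr
    _ = (2*M₁ + M₂)/c^2 := by rw [sq]; ring
    _ ≤ (2*M₁ + M₂)/(n:ℝ)^2 := by
        apply div_le_div_of_nonneg_left (by linarith) (by positivity) hcn
    _ ≤ ((2*M₀ + M₁) + (2*M₁ + M₂)) / (n:ℝ)^2 := by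
        apply (div_le_div_iff_of_pos_right (by positivity)).mpr
        linarith



/-- For `r` of class `C²` on `[0,1]`, the quantity
`n^{3/2} ∫_0^t ∫_0^s r(u) cos(2πH_n(ω,u)) du ds` tends to `0` uniformly in `t` and `ω`;
more precisely the iterated integral equals `(1/(2πn)) ∫_0^t r(s) sin(2πns) ds + O(1/n²)`
uniformly, and the first term is itself `O(1/n²)`. -/
theorem scaled_r_cos_double_integral_vanishes
    {Ω : Type*} [MeasurableSpace Ω] (P : MeasureTheory.Measure Ω)
    [MeasureTheory.IsProbabilityMeasure P]
    (X : ℕ → Ω → ℝ) (hXmeas : ∀ k, Measurable (X k))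
    (hiid : ProbabilityTheory.iIndepFun X P)
    (hdist : ∀ k, P {ω | X k ω = 1} = 1/2 ∧ P {ω | X k ω = -1} = 1/2)
    (hpm : ∀ k ω, X k ω = 1 ∨ X k ω = -1)
    (H : ℕ → Ω → ℝ → ℝ)
    (hH : ∀ n : ℕ, 1 ≤ n → ∀ (ω : Ω) (k : ℕ), k ≤ n - 1 → ∀ u : ℝ,
      (k : ℝ) / n ≤ u → u ≤ ((k : ℝ) + 1) / n →
      H n ω u = (∑ i ∈ Finset.range k, X (i + 1) ω) + n * X (k + 1) ω * (u - (k : ℝ) / n))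
    (r r' r'' : ℝ → ℝ)
    (hr : ∀ u ∈ Set.Icc (0:ℝ) 1, HasDerivWithinAt r (r' u) (Set.Icc 0 1) u)
    (hr' : ∀ u ∈ Set.Icc (0:ℝ) 1, HasDerivWithinAt r' (r'' u) (Set.Icc 0 1) u)
    (hr'' : ContinuousOn r'' (Set.Icc 0 1)) :
    (∀ ε : ℝ, 0 < ε → ∃ N : ℕ, ∀ n : ℕ, N ≤ n → ∀ (ω : Ω), ∀ t ∈ Set.Icc (0:ℝ) 1,
      |(n : ℝ) ^ ((3:ℝ)/2) *
        ∫ s in (0:ℝ)..t, (∫ u in (0:ℝ)..s, r u * Real.cos (2 * π * H n ω u))| ≤ ε) ∧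
    (∃ C : ℝ, 0 ≤ C ∧ ∀ (n : ℕ), 1 ≤ n → ∀ (ω : Ω), ∀ t ∈ Set.Icc (0:ℝ) 1,
      |(∫ s in (0:ℝ)..t, (∫ u in (0:ℝ)..s, r u * Real.cos (2 * π * H n ω u))) -
        (1 / (2 * π * n)) * ∫ s in (0:ℝ)..t, r s * Real.sin (2 * π * n * s)| ≤ C / n ^ 2 ∧
      |(1 / (2 * π * n)) * ∫ s in (0:ℝ)..t, r s * Real.sin (2 * π * n * s)| ≤ C / n ^ 2) := by
  obtain ⟨C, hC0, hC⟩ := core_est r r' r'' hr hr' hr''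
  have hrw : ∀ n : ℕ, 1 ≤ n → ∀ ω : Ω, ∀ t ∈ Set.Icc (0:ℝ) 1,
      (∫ s in (0:ℝ)..t, ∫ u in (0:ℝ)..s, r u * Real.cos (2 * π * H n ω u))
      = ∫ s in (0:ℝ)..t, ∫ u in (0:ℝ)..s, r u * Real.cos (2 * π * n * u) := by
    intro n hn ω t ht
    apply intervalIntegral.integral_congr
    intro s hs
    rw [Set.uIcc_of_le ht.1] at hs
    have hs1 : s ∈ Set.Icc (0:ℝ) 1 := ⟨hs.1, hs.2.trans ht.2⟩
    simp only
    apply intervalIntegral.integral_congr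
    intro u hu
    rw [Set.uIcc_of_le hs1.1] at hu
    have hu1 : u ∈ Set.Icc (0:ℝ) 1 := ⟨hu.1, hu.2.trans hs1.2⟩
    simp only
    rw [cosH hn (H n ω) (fun k => X k ω) (fun k => hpm k ω)
      (fun k hk u h1 h2 => hH n hn ω k hk u h1 h2) hu1]
  constructor
  · intro ε hε
    refine ⟨max 1 (⌈(2*C/ε)^2⌉₊ + 1), ?_⟩
    intro n hn ω t ht
    have hn1 : 1 ≤ n := le_trans (le_max_left _ _) hn
    have hnR : (1:ℝ) ≤ n := by exact_mod_cast hn1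
    have hn0 : (0:ℝ) < n := by linarith
    obtain ⟨h1, h2⟩ := hC n hn1 t ht
    rw [hrw n hn1 ω t ht]
    set D := ∫ s in (0:ℝ)..t, ∫ u in (0:ℝ)..s, r u * Real.cos (2 * π * n * u) with hD1
    set T := (1 / (2 * π * (n:ℝ))) * ∫ s in (0:ℝ)..t, r s * Real.sin (2 * π * n * s) with hT1
    have hD : |D| ≤ 2*C/(n:ℝ)^2 := by
      calc |D| = |(D - T) + T| := by congr 1; ring
        _ ≤ |D - T| + |T| := abs_add_le _ _
        _ ≤ C/(n:ℝ)^2 + C/(n:ℝ)^2 := add_le_add h1 h2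
        _ = 2*C/(n:ℝ)^2 := by ring
    have hsq : (0:ℝ) < Real.sqrt n := Real.sqrt_pos.mpr hn0
    have hkey : (n:ℝ)^((3:ℝ)/2) * (2*C/(n:ℝ)^2) = 2*C/Real.sqrt n := by
      have h2' : ((n:ℝ)^((3:ℝ)/2)) * Real.sqrt n = (n:ℝ)^2 := by
        rw [Real.sqrt_eq_rpow, ← Real.rpow_add hn0]
        rw [show ((3:ℝ)/2 + 1/2) = ((2:ℕ):ℝ) by norm_num, Real.rpow_natCast]
      have h3 : (n:ℝ)^((3:ℝ)/2) = (n:ℝ)^2 / Real.sqrt n := by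
        rw [eq_div_iff hsq.ne']; exact h2'
      rw [h3]
      field_simp
    have habs : |(n:ℝ)^((3:ℝ)/2) * D| ≤ 2*C/Real.sqrt n := by
      rw [abs_mul, abs_of_nonneg (Real.rpow_nonneg hn0.le _)]
      calc (n:ℝ)^((3:ℝ)/2) * |D| ≤ (n:ℝ)^((3:ℝ)/2) * (2*C/(n:ℝ)^2) :=
            mul_le_mul_of_nonneg_left hD (Real.rpow_nonneg hn0.le _)
        _ = 2*C/Real.sqrt n := hkey
    refine habs.trans ?_
    rw [div_le_iff₀ hsq]
    have hNle : ((2*C/ε)^2 : ℝ) ≤ n := by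
      have h7 : ⌈(2*C/ε)^2⌉₊ + 1 ≤ n := le_trans (le_max_right _ _) hn
      have h5 : (⌈(2*C/ε)^2⌉₊ : ℝ) ≤ n := by exact_mod_cast Nat.le_of_succ_le h7
      exact le_trans (Nat.le_ceil _) h5
    have h6 : 2*C/ε ≤ Real.sqrt n := by
      rw [show (2*C/ε) = Real.sqrt ((2*C/ε)^2) from (Real.sqrt_sq (by positivity)).symm]
      exact Real.sqrt_le_sqrt hNle
    calc 2*C = (2*C/ε) * ε := (div_mul_cancel₀ _ hε.ne').symm
      _ ≤ Real.sqrt n * ε := mul_le_mul_of_nonneg_right h6 hε.le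
      _ = ε * Real.sqrt n := mul_comm _ _
  · refine ⟨C, hC0, ?_⟩
    intro n hn ω t ht
    rw [hrw n hn ω t ht]
    exact hC n hn t ht
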